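/- On (ℂ²)^⊗3, let G₁ = U(π/4)₁₂ · U(π/4)₂₃ · U(3π/4)₁₂ · U(3π/4)₂₃, where U(θ)_{ij} = cos θ·I + i sin θ·SWAP_{ij}. Then the characteristic polynomial of the 8×8 matrix G₁ is (x−1)⁴·(x² − (5/4)x + 1)²; in particular G₁ is unitary with determinant 1, its eigenvalues are 1 (multiplicity 4) and e^{±iφ} (each with multiplicity 2) where cos φ = 5/8, and it acts trivially on the spin-3/2 (totally symmetric) sector. -/

import Mathlib

open Matrix Complex

noncomputable section

/-- The SWAP of tensor factors `i` and `j` on `(ℂ²)^⊗n`. -/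
def swapM (n : ℕ) (i j : Fin n) : Matrix (Fin n → Fin 2) (Fin n → Fin 2) ℂ :=
  fun x y => if x = y ∘ Equiv.swap i j then 1 else 0

/-- The exchange gate `U(θ)_{ij} = exp(iθ·SWAP_{ij}) = cos θ·I + i sin θ·SWAP_{ij}`. -/
def exch (n : ℕ) (θ : ℝ) (i j : Fin n) : Matrix (Fin n → Fin 2) (Fin n → Fin 2) ℂ :=
  (Real.cos θ : ℂ) • (1 : Matrix (Fin n → Fin 2) (Fin n → Fin 2) ℂ)
    + (Complex.I * (Real.sin θ : ℂ)) • swapM n i j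

/-- The generator `G₁ = U(π/4)₁₂ · U(π/4)₂₃ · U(3π/4)₁₂ · U(3π/4)₂₃` on three qubits. -/
def G₁ : Matrix (Fin 3 → Fin 2) (Fin 3 → Fin 2) ℂ :=
  exch 3 (Real.pi / 4) 0 1 * exch 3 (Real.pi / 4) 1 2 *
    exch 3 (3 * Real.pi / 4) 0 1 * exch 3 (3 * Real.pi / 4) 1 2

/-! ### Auxiliary material -/

/-- The permutation matrix on `(ℂ²)^⊗n` attached to a permutation of the factors. -/
def permM (n : ℕ) (σ : Equiv.Perm (Fin n)) :
    Matrix (Fin n → Fin 2) (Fin n → Fin 2) ℂ :=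
  fun x y => if x = y ∘ σ then 1 else 0

lemma swapM_eq_permM (n : ℕ) (i j : Fin n) : swapM n i j = permM n (Equiv.swap i j) := rfl

lemma comp_eq_iff {n : ℕ} (σ : Equiv.Perm (Fin n)) (x y : Fin n → Fin 2) :
    x = y ∘ σ ↔ y = x ∘ σ.symm := by
  constructor
  · rintro rfl; funext k; simp
  · rintro rfl; funext k; simp

lemma permM_mul (n : ℕ) (σ τ : Equiv.Perm (Fin n)) :
    permM n σ * permM n τ = permM n (σ.trans τ) := by
  ext x y
  rw [Matrix.mul_apply, Finset.sum_eq_single (x ∘ ⇑σ.symm)]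
  · have h1 : x = (x ∘ ⇑σ.symm) ∘ ⇑σ := by funext k; simp
    have h2 : (x ∘ ⇑σ.symm = y ∘ ⇑τ) ↔ (x = y ∘ ⇑(σ.trans τ)) := by
      constructor
      · intro h; funext k
        have := congrFun h (σ k); simpa using this
      · intro h; funext k
        have := congrFun h (σ.symm k)
        simpa using this
    show (if x = (x ∘ ⇑σ.symm) ∘ ⇑σ then (1:ℂ) else 0) *
        (if x ∘ ⇑σ.symm = y ∘ ⇑τ then (1:ℂ) else 0) = _
    rw [if_pos h1, one_mul]
    exact if_congr h2 rfl rfl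
  · intro z _ hz
    show (if x = z ∘ ⇑σ then (1:ℂ) else 0) * _ = 0
    rw [if_neg fun h => hz ((comp_eq_iff σ x z).mp h), zero_mul]
  · intro h; exact absurd (Finset.mem_univ _) h

lemma permM_one (n : ℕ) : permM n 1 = 1 := by
  ext x y
  simp [permM, Matrix.one_apply]

lemma swapM_mul_self (n : ℕ) (i j : Fin n) : swapM n i j * swapM n i j = 1 := by
  rw [swapM_eq_permM, permM_mul, Equiv.swap_swap]
  exact permM_one n

lemma permM_star (n : ℕ) (σ : Equiv.Perm (Fin n)) :
    star (permM n σ) = permM n σ.symm := by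
  ext x y
  show star (permM n σ y x) = _
  show star (if y = x ∘ ⇑σ then (1:ℂ) else 0) = (if x = y ∘ ⇑σ.symm then (1:ℂ) else 0)
  rw [apply_ite (star : ℂ → ℂ), star_one, star_zero]
  exact if_congr ((comp_eq_iff σ y x).trans (by rfl)) rfl rfl

lemma swapM_star (n : ℕ) (i j : Fin n) : star (swapM n i j) = swapM n i j := by
  rw [swapM_eq_permM, permM_star, Equiv.symm_swap]

lemma exch_star (n : ℕ) (θ : ℝ) (i j : Fin n) :
    star (exch n θ i j) =
      (Real.cos θ : ℂ) • (1 : Matrix (Fin n → Fin 2) (Fin n → Fin 2) ℂ)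
        - (Complex.I * (Real.sin θ : ℂ)) • swapM n i j := by
  unfold exch
  rw [star_add, star_smul, star_smul, star_one, swapM_star]
  have h1 : star ((Real.cos θ : ℂ)) = (Real.cos θ : ℂ) := by
    rw [Complex.star_def, Complex.conj_ofReal]
  have h2 : star (Complex.I * (Real.sin θ : ℂ)) = -(Complex.I * (Real.sin θ : ℂ)) := by
    rw [Complex.star_def, _root_.map_mul, Complex.conj_ofReal, Complex.conj_I]
    ring
  rw [h1, h2, neg_smul, ← sub_eq_add_neg]

lemma exch_mul_star (n : ℕ) (θ : ℝ) (i j : Fin n) :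
    exch n θ i j * star (exch n θ i j) = 1 := by
  rw [exch_star]
  unfold exch
  set a : ℂ := (Real.cos θ : ℂ) with ha
  set b : ℂ := Complex.I * (Real.sin θ : ℂ) with hb
  set S := swapM n i j with hS
  have key : a * a - b * b = 1 := by
    have hre : (Real.sin θ : ℂ)^2 + (Real.cos θ : ℂ)^2 = 1 := by
      have := Real.sin_sq_add_cos_sq θ
      exact_mod_cast congrArg (fun x : ℝ => (x : ℂ)) this
    rw [ha, hb]
    linear_combination hre - (Real.sin θ : ℂ)^2 * Complex.I_sq
  have hSS : S * S = 1 := swapM_mul_self n i j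
  rw [add_mul, mul_sub, mul_sub]
  simp only [smul_mul_assoc, mul_smul_comm, one_mul, mul_one, smul_smul, hSS]
  rw [mul_comm b a]
  have : (a*a) • (1 : Matrix (Fin n → Fin 2) (Fin n → Fin 2) ℂ) - (a*b) • S
      + ((a*b) • S - (b*b) • 1) = (a*a - b*b) • 1 := by
    rw [sub_smul]; abel
  rw [this, key, one_smul]

lemma exch_mem_unitary (n : ℕ) (θ : ℝ) (i j : Fin n) :
    exch n θ i j ∈ Matrix.unitaryGroup (Fin n → Fin 2) ℂ := by
  rw [Matrix.mem_unitaryGroup_iff]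
  exact exch_mul_star n θ i j

/-! ### Action on symmetric vectors -/

lemma permM_mulVec {n : ℕ} (σ : Equiv.Perm (Fin n)) (v : (Fin n → Fin 2) → ℂ)
    (hv : ∀ (τ : Equiv.Perm (Fin n)) (x : Fin n → Fin 2), v (x ∘ τ) = v x) :
    permM n σ *ᵥ v = v := by
  funext x
  show ∑ y, permM n σ x y * v y = v x
  rw [Finset.sum_eq_single (x ∘ ⇑σ.symm)]
  · have h1 : x = (x ∘ ⇑σ.symm) ∘ ⇑σ := by funext k; simp
    show (if x = (x ∘ ⇑σ.symm) ∘ ⇑σ then (1:ℂ) else 0) * v (x ∘ ⇑σ.symm) = v x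
    rw [if_pos h1, one_mul]
    exact hv σ.symm x
  · intro z _ hz
    show (if x = z ∘ ⇑σ then (1:ℂ) else 0) * v z = 0
    rw [if_neg fun h => hz ((comp_eq_iff σ x z).mp h), zero_mul]
  · intro h; exact absurd (Finset.mem_univ _) h

lemma exch_mulVec {n : ℕ} (θ : ℝ) (i j : Fin n) (v : (Fin n → Fin 2) → ℂ)
    (hv : ∀ (τ : Equiv.Perm (Fin n)) (x : Fin n → Fin 2), v (x ∘ τ) = v x) :
    exch n θ i j *ᵥ v = ((Real.cos θ : ℂ) + Complex.I * (Real.sin θ : ℂ)) • v := by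
  unfold exch
  rw [Matrix.add_mulVec, Matrix.smul_mulVec, Matrix.smul_mulVec,
    Matrix.one_mulVec, swapM_eq_permM, permM_mulVec _ _ hv, add_smul]

/-! ### Explicit matrices over the Gaussian integers -/

def qE : Fin 8 ≃ (Fin 3 → Fin 2) :=
  (finCongr (by norm_num : (8:ℕ) = 2^3)).trans finFunctionFinEquiv.symm

def gi : GaussianInt := ⟨0, 1⟩

def A8z : Matrix (Fin 8) (Fin 8) GaussianInt :=
  Matrix.of fun a b => if qE a = qE b ∘ Equiv.swap 0 1 then 1 else 0

def B8z : Matrix (Fin 8) (Fin 8) GaussianInt :=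
  Matrix.of fun a b => if qE a = qE b ∘ Equiv.swap 1 2 then 1 else 0

def Mz : Matrix (Fin 8) (Fin 8) GaussianInt :=
  !![4, 0, 0, 0, 0, 0, 0, 0;
     0, ⟨3,-1⟩, ⟨2,1⟩, 0, -1, 0, 0, 0;
     0, ⟨-1,1⟩, 3, 0, ⟨2,-1⟩, 0, 0, 0;
     0, 0, 0, ⟨3,1⟩, 0, ⟨-1,-1⟩, 2, 0;
     0, ⟨2,0⟩, ⟨-1,-1⟩, 0, ⟨3,1⟩, 0, 0, 0;
     0, 0, 0, ⟨2,-1⟩, 0, 3, ⟨-1,1⟩, 0;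
     0, 0, 0, -1, 0, ⟨2,1⟩, ⟨3,-1⟩, 0;
     0, 0, 0, 0, 0, 0, 0, 4]

def Qz : Matrix (Fin 8) (Fin 8) GaussianInt :=
  !![4, 0, 0, 0, 0, 0, 0, 0;
     0, 0, 4, 0, 4, ⟨1,-2⟩, 0, 0;
     0, 0, 4, 0, -4, ⟨-4,1⟩, 0, 0;
     0, 0, 0, 4, 0, 0, 4, ⟨4,2⟩;
     0, 0, 4, 0, 0, ⟨3,1⟩, 0, 0;
     0, 0, 0, 4, 0, 0, -4, ⟨-1,-1⟩;
     0, 0, 0, 4, 0, 0, 0, ⟨-3,-1⟩;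
     0, 4, 0, 0, 0, 0, 0, 0]

def Rz : Matrix (Fin 8) (Fin 8) GaussianInt :=
  !![30, 0, 0, 0, 0, 0, 0, 0;
     0, 0, 0, 0, 0, 0, 0, 30;
     0, 10, 10, 0, 10, 0, 0, 0;
     0, 0, 0, 10, 0, 10, 10, 0;
     0, ⟨21,-7⟩, ⟨-9,-7⟩, 0, ⟨-12,14⟩, 0, 0, 0;
     0, ⟨-12,4⟩, ⟨-12,4⟩, 0, ⟨24,-8⟩, 0, 0, 0;
     0, 0, 0, ⟨6,-2⟩, 0, ⟨-24,-2⟩, ⟨18,4⟩, 0;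
     0, 0, 0, ⟨12,-4⟩, 0, ⟨12,-4⟩, ⟨-24,8⟩, 0]

def N4z : Matrix (Fin 8) (Fin 8) GaussianInt :=
  Matrix.of fun a b =>
    if a = b ∧ a.val ≤ 3 then 4
    else if a.val = 5 ∧ b.val = 4 then 4
    else if a.val = 4 ∧ b.val = 5 then -4
    else if a = b ∧ a.val = 5 then 5
    else if a.val = 7 ∧ b.val = 6 then 4
    else if a.val = 6 ∧ b.val = 7 then -4
    else if a = b ∧ a.val = 7 then 5
    else 0

set_option maxHeartbeats 1000000 in
lemma hMz : (1 + gi • A8z) * (1 + gi • B8z) * (-1 + gi • A8z) * (-1 + gi • B8z) = Mz := by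
  decide

set_option maxHeartbeats 1000000 in
lemma hMQ : Mz * Qz = Qz * N4z := by decide

set_option maxHeartbeats 1000000 in
lemma hQR : Qz * Rz = (120 : GaussianInt) • (1 : Matrix (Fin 8) (Fin 8) GaussianInt) := by
  decide

/-! ### Transfer to `ℂ` -/

lemma toC_gi : GaussianInt.toComplex gi = Complex.I := by
  rw [gi]
  simp [GaussianInt.toComplex_def']

lemma map_smul_toC (c : GaussianInt) (X : Matrix (Fin 8) (Fin 8) GaussianInt) :
    (c • X).map GaussianInt.toComplex
      = GaussianInt.toComplex c • X.map GaussianInt.toComplex := by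
  ext a b
  simp [Matrix.map_apply, Matrix.smul_apply, smul_eq_mul, _root_.map_mul]

lemma map_one_toC : (1 : Matrix (Fin 8) (Fin 8) GaussianInt).map GaussianInt.toComplex = 1 :=
  Matrix.map_one _ (_root_.map_zero _) (_root_.map_one _)

lemma hswapA : swapM 3 0 1 = (Matrix.reindex qE qE) (A8z.map GaussianInt.toComplex) := by
  ext x y
  rw [Matrix.reindex_apply, Matrix.submatrix_apply, Matrix.map_apply]
  show (if x = y ∘ ⇑(Equiv.swap 0 1) then (1:ℂ) else 0) = _
  rw [show A8z (qE.symm x) (qE.symm y)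
      = (if qE (qE.symm x) = qE (qE.symm y) ∘ Equiv.swap 0 1 then 1 else 0) from rfl]
  rw [apply_ite GaussianInt.toComplex, _root_.map_one, _root_.map_zero,
    Equiv.apply_symm_apply, Equiv.apply_symm_apply]

lemma hswapB : swapM 3 1 2 = (Matrix.reindex qE qE) (B8z.map GaussianInt.toComplex) := by
  ext x y
  rw [Matrix.reindex_apply, Matrix.submatrix_apply, Matrix.map_apply]
  show (if x = y ∘ ⇑(Equiv.swap 1 2) then (1:ℂ) else 0) = _
  rw [show B8z (qE.symm x) (qE.symm y)
      = (if qE (qE.symm x) = qE (qE.symm y) ∘ Equiv.swap 1 2 then 1 else 0) from rfl]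
  rw [apply_ite GaussianInt.toComplex, _root_.map_one, _root_.map_zero,
    Equiv.apply_symm_apply, Equiv.apply_symm_apply]

lemma map_onePlus (Z : Matrix (Fin 8) (Fin 8) GaussianInt) :
    ((1 + gi • Z).map GaussianInt.toComplex)
      = 1 + Complex.I • (Z.map GaussianInt.toComplex) := by
  ext a b
  simp [Matrix.map_apply, Matrix.add_apply, Matrix.smul_apply, Matrix.one_apply,
    apply_ite GaussianInt.toComplex, smul_eq_mul, _root_.map_add, _root_.map_mul, toC_gi]

lemma map_negOnePlus (Z : Matrix (Fin 8) (Fin 8) GaussianInt) :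
    ((-1 + gi • Z).map GaussianInt.toComplex)
      = -1 + Complex.I • (Z.map GaussianInt.toComplex) := by
  ext a b
  simp [Matrix.map_apply, Matrix.add_apply, Matrix.neg_apply, Matrix.smul_apply,
    Matrix.one_apply, apply_ite GaussianInt.toComplex, smul_eq_mul, _root_.map_add, _root_.map_mul,
    _root_.map_neg, toC_gi]

/-! ### The decomposition of `G₁` -/

lemma exch_dec1 (i j : Fin 3) :
    exch 3 (Real.pi / 4) i j
      = ((Real.sqrt 2 / 2 : ℝ) : ℂ) • (1 + Complex.I • swapM 3 i j) := by
  unfold exch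
  rw [Real.cos_pi_div_four, Real.sin_pi_div_four]
  module

lemma exch_dec3 (i j : Fin 3) :
    exch 3 (3 * Real.pi / 4) i j
      = ((Real.sqrt 2 / 2 : ℝ) : ℂ) • (-1 + Complex.I • swapM 3 i j) := by
  unfold exch
  rw [show 3 * Real.pi / 4 = Real.pi - Real.pi / 4 by ring, Real.cos_pi_sub,
    Real.sin_pi_sub, Real.cos_pi_div_four, Real.sin_pi_div_four]
  push_cast
  module

lemma hs2C : ((Real.sqrt 2 : ℝ) : ℂ) * ((Real.sqrt 2 : ℝ) : ℂ) = 2 := by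
  rw [← Complex.ofReal_mul, Real.mul_self_sqrt (by norm_num)]
  norm_num

lemma G₁_eq : G₁ = (Matrix.reindexAlgEquiv ℂ ℂ qE)
    ((1/4 : ℂ) • (Mz.map GaussianInt.toComplex)) := by
  have key : ∀ Z : Matrix (Fin 8) (Fin 8) GaussianInt,
      (Matrix.reindexAlgEquiv ℂ ℂ qE) (Z.map GaussianInt.toComplex)
        = (Matrix.reindex qE qE) (Z.map GaussianInt.toComplex) := fun _ => rfl
  unfold G₁
  rw [exch_dec1, exch_dec1, exch_dec3, exch_dec3]
  rw [smul_mul_smul_comm, smul_mul_smul_comm, smul_mul_smul_comm]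
  rw [hswapA, hswapB]
  rw [← key, ← key]
  rw [show (1 : Matrix (Fin 3 → Fin 2) (Fin 3 → Fin 2) ℂ)
      + Complex.I • (Matrix.reindexAlgEquiv ℂ ℂ qE) (A8z.map GaussianInt.toComplex)
      = (Matrix.reindexAlgEquiv ℂ ℂ qE) (1 + Complex.I • A8z.map GaussianInt.toComplex) by
    rw [_root_.map_add, _root_.map_one, _root_.map_smul]]
  rw [show (1 : Matrix (Fin 3 → Fin 2) (Fin 3 → Fin 2) ℂ)
      + Complex.I • (Matrix.reindexAlgEquiv ℂ ℂ qE) (B8z.map GaussianInt.toComplex)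
      = (Matrix.reindexAlgEquiv ℂ ℂ qE) (1 + Complex.I • B8z.map GaussianInt.toComplex) by
    rw [_root_.map_add, _root_.map_one, _root_.map_smul]]
  rw [show (-1 : Matrix (Fin 3 → Fin 2) (Fin 3 → Fin 2) ℂ)
      + Complex.I • (Matrix.reindexAlgEquiv ℂ ℂ qE) (A8z.map GaussianInt.toComplex)
      = (Matrix.reindexAlgEquiv ℂ ℂ qE) (-1 + Complex.I • A8z.map GaussianInt.toComplex) by
    rw [_root_.map_add, _root_.map_neg, _root_.map_one, _root_.map_smul]]
  rw [show (-1 : Matrix (Fin 3 → Fin 2) (Fin 3 → Fin 2) ℂ)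
      + Complex.I • (Matrix.reindexAlgEquiv ℂ ℂ qE) (B8z.map GaussianInt.toComplex)
      = (Matrix.reindexAlgEquiv ℂ ℂ qE) (-1 + Complex.I • B8z.map GaussianInt.toComplex) by
    rw [_root_.map_add, _root_.map_neg, _root_.map_one, _root_.map_smul]]
  rw [← _root_.map_mul, ← _root_.map_mul, ← _root_.map_mul]
  rw [← map_onePlus A8z, ← map_onePlus B8z, ← map_negOnePlus A8z, ← map_negOnePlus B8z]
  rw [← Matrix.map_mul, ← Matrix.map_mul, ← Matrix.map_mul, hMz]
  rw [← _root_.map_smul]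
  congr 1
  have : ((Real.sqrt 2 / 2 : ℝ) : ℂ) * ((Real.sqrt 2 / 2 : ℝ):ℂ)
      * ((Real.sqrt 2 / 2 : ℝ):ℂ) * ((Real.sqrt 2 / 2 : ℝ):ℂ) = 1/4 := by
    push_cast
    linear_combination ((((Real.sqrt 2 :ℝ):ℂ) * ((Real.sqrt 2:ℝ):ℂ) + 2)/16) * hs2C
  rw [this]

/-! ### Characteristic polynomial via conjugation -/

lemma charpoly_conj {m : Type*} [DecidableEq m] [Fintype m]
    (M N Q R : Matrix m m ℂ) (hQR' : Q * R = 1) (h : M * Q = Q * N) :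
    M.charpoly = N.charpoly := by
  have hRQ : R * Q = 1 := mul_eq_one_comm.mp hQR'
  have hM : M = Q * N * R := by
    have h2 : M * (Q * R) = Q * N * R := by rw [← mul_assoc, h]
    rw [hQR', mul_one] at h2
    exact h2
  set g := ((Polynomial.C : ℂ →+* Polynomial ℂ).mapMatrix : Matrix m m ℂ →+* Matrix m m (Polynomial ℂ)) with hg
  have hgQR : g Q * g R = 1 := by rw [← _root_.map_mul, hQR', _root_.map_one]
  have hch : ∀ S : Matrix m m ℂ,
      charmatrix S = Matrix.scalar m (Polynomial.X : Polynomial ℂ) - g S := fun _ => rfl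
  have hs : Matrix.scalar m (Polynomial.X : Polynomial ℂ)
      = g Q * Matrix.scalar m (Polynomial.X : Polynomial ℂ) * g R := by
    have hc := Matrix.scalar_commute (n := m) (Polynomial.X : Polynomial ℂ)
      (fun r => mul_comm _ r) (g R)
    calc Matrix.scalar m (Polynomial.X : Polynomial ℂ)
        = (g Q * g R) * Matrix.scalar m (Polynomial.X : Polynomial ℂ) := by
          rw [hgQR, one_mul]
      _ = g Q * (g R * Matrix.scalar m (Polynomial.X : Polynomial ℂ)) := by
          rw [mul_assoc]
      _ = g Q * (Matrix.scalar m (Polynomial.X : Polynomial ℂ) * g R) := by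
          rw [← hc]
      _ = g Q * Matrix.scalar m (Polynomial.X : Polynomial ℂ) * g R := by
          rw [mul_assoc]
  have hkey : charmatrix M = g Q * charmatrix N * g R := by
    rw [hch, hch, hM, _root_.map_mul, _root_.map_mul, mul_sub, sub_mul, ← hs, mul_assoc]
  unfold Matrix.charpoly
  rw [hkey, Matrix.det_mul, Matrix.det_mul]
  have hdet1 : (g Q).det * (g R).det = 1 := by
    rw [← Matrix.det_mul, hgQR, Matrix.det_one]
  rw [mul_comm ((g Q).det), mul_assoc, hdet1, mul_one]

def C2 : Matrix (Fin 2) (Fin 2) ℂ := !![0, -1; 1, 5/4]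

def Ntot : Matrix (Fin 4 ⊕ (Fin 2 ⊕ Fin 2)) (Fin 4 ⊕ (Fin 2 ⊕ Fin 2)) ℂ :=
  Matrix.fromBlocks 1 0 0 (Matrix.fromBlocks C2 0 0 C2)

def eS : (Fin 4 ⊕ (Fin 2 ⊕ Fin 2)) ≃ Fin 8 :=
  (Equiv.sumCongr (Equiv.refl (Fin 4)) finSumFinEquiv).trans finSumFinEquiv

open Polynomial in
lemma charpoly_C2 : C2.charpoly = X ^ 2 - C (5 / 4 : ℂ) * X + 1 := by
  have h : charmatrix C2 = !![(X : Polynomial ℂ), 1; -1, X - C (5/4 : ℂ)] := by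
    ext i j
    fin_cases i <;> fin_cases j <;>
      simp +decide [C2, charmatrix_apply_eq, charmatrix_apply_ne, _root_.map_neg]
  unfold Matrix.charpoly
  rw [h, Matrix.det_fin_two]
  simp
  ring

open Polynomial in
lemma charpoly_one4 : (1 : Matrix (Fin 4) (Fin 4) ℂ).charpoly = (X - 1) ^ 4 := by
  rw [Matrix.charpoly_of_upperTriangular _ Matrix.blockTriangular_one]
  simp [Polynomial.C_1, Finset.prod_const]

open Polynomial in
lemma charpoly_Ntot : Ntot.charpoly = (X - 1) ^ 4 * (X ^ 2 - C (5 / 4 : ℂ) * X + 1) ^ 2 := by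
  unfold Ntot
  rw [Matrix.charpoly_fromBlocks_zero₁₂, Matrix.charpoly_fromBlocks_zero₁₂,
    charpoly_one4, charpoly_C2]
  ring

lemma hNN : (((1/4 : ℂ) • (N4z.map GaussianInt.toComplex)).submatrix eS eS) = Ntot := by
  ext a b
  rcases a with a | a | a <;> rcases b with b | b | b <;> fin_cases a <;> fin_cases b <;>
    simp +decide [N4z, Ntot, C2, Matrix.submatrix_apply, Matrix.smul_apply,
      Matrix.map_apply, Matrix.one_apply, _root_.map_ofNat, _root_.map_neg,
      _root_.map_zero] <;> norm_num

lemma hN'eq : (1/4 : ℂ) • (N4z.map GaussianInt.toComplex) = (Matrix.reindex eS eS) Ntot := by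
  rw [← hNN]
  rw [show (((1/4 : ℂ) • (N4z.map GaussianInt.toComplex)).submatrix ⇑eS ⇑eS)
      = (Matrix.reindex eS eS).symm ((1/4 : ℂ) • (N4z.map GaussianInt.toComplex)) from rfl,
    Equiv.apply_symm_apply]

set_option maxHeartbeats 1000000 in
open Polynomial in
lemma G₁_charpoly_eq :
    G₁.charpoly = (X - 1) ^ 4 * (X ^ 2 - C (5 / 4 : ℂ) * X + 1) ^ 2 := by
  rw [G₁_eq]
  rw [show (Matrix.reindexAlgEquiv ℂ ℂ qE) ((1/4 : ℂ) • (Mz.map GaussianInt.toComplex))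
      = (Matrix.reindex qE qE) ((1/4 : ℂ) • (Mz.map GaussianInt.toComplex)) from rfl]
  rw [Matrix.charpoly_reindex]
  have hconj : ((1/4 : ℂ) • (Mz.map GaussianInt.toComplex)) * (Qz.map GaussianInt.toComplex)
      = (Qz.map GaussianInt.toComplex) * ((1/4 : ℂ) • (N4z.map GaussianInt.toComplex)) := by
    rw [smul_mul_assoc, mul_smul_comm, ← Matrix.map_mul, ← Matrix.map_mul, hMQ]
  have hqr : (Qz.map GaussianInt.toComplex) * ((1/120 : ℂ) • (Rz.map GaussianInt.toComplex))
      = 1 := by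
    rw [mul_smul_comm, ← Matrix.map_mul, hQR, map_smul_toC, map_one_toC, smul_smul,
      show GaussianInt.toComplex 120 = (120 : ℂ) from map_ofNat _ 120]
    norm_num
  rw [charpoly_conj _ _ _ _ hqr hconj, hN'eq, Matrix.charpoly_reindex]
  exact charpoly_Ntot

/-! ### The main theorem -/

open Polynomial in
/-- The characteristic polynomial of `G₁` is `(x-1)⁴(x² - (5/4)x + 1)²`; in particular
`G₁` is unitary with determinant 1 and acts trivially on the totally symmetric sector. -/
theorem G₁_charpoly :
    G₁.charpoly = (X - 1) ^ 4 * (X ^ 2 - C (5 / 4 : ℂ) * X + 1) ^ 2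
    ∧ G₁ ∈ Matrix.unitaryGroup (Fin 3 → Fin 2) ℂ
    ∧ G₁.det = 1
    ∧ ∀ v : (Fin 3 → Fin 2) → ℂ,
        (∀ (σ : Equiv.Perm (Fin 3)) (x : Fin 3 → Fin 2), v (x ∘ σ) = v x) →
        G₁ *ᵥ v = v := by
  have hcp := G₁_charpoly_eq
  refine ⟨hcp, ?_, ?_, ?_⟩
  · unfold G₁
    exact mul_mem (mul_mem (mul_mem (exch_mem_unitary 3 _ 0 1) (exch_mem_unitary 3 _ 1 2))
      (exch_mem_unitary 3 _ 0 1)) (exch_mem_unitary 3 _ 1 2)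
  · rw [Matrix.det_eq_sign_charpoly_coeff, hcp]
    have hcard : Fintype.card (Fin 3 → Fin 2) = 8 := by simp
    rw [hcard, Polynomial.coeff_zero_eq_eval_zero]
    simp
    norm_num
  · intro v hv
    unfold G₁
    rw [← Matrix.mulVec_mulVec, ← Matrix.mulVec_mulVec, ← Matrix.mulVec_mulVec]
    simp only [exch_mulVec _ _ _ _ hv, Matrix.mulVec_smul]
    rw [smul_smul, smul_smul, smul_smul]
    have hscal : ((Real.cos (3*Real.pi/4) : ℂ) + Complex.I * (Real.sin (3*Real.pi/4) : ℂ))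
        * ((Real.cos (3*Real.pi/4) : ℂ) + Complex.I * (Real.sin (3*Real.pi/4) : ℂ))
        * ((Real.cos (Real.pi/4) : ℂ) + Complex.I * (Real.sin (Real.pi/4) : ℂ))
        * ((Real.cos (Real.pi/4) : ℂ) + Complex.I * (Real.sin (Real.pi/4) : ℂ)) = 1 := by
      rw [show 3 * Real.pi / 4 = Real.pi - Real.pi / 4 by ring, Real.cos_pi_sub,
        Real.sin_pi_sub, Real.cos_pi_div_four, Real.sin_pi_div_four]
      push_cast
      linear_combination ((((Real.sqrt 2:ℝ):ℂ) * ((Real.sqrt 2:ℝ):ℂ) + 2)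
          * (Complex.I^2 - 1)^2 / 16) * hs2C
        + ((Complex.I^2 - 3)/4) * Complex.I_sq
    rw [hscal, one_smul]

end
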